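/- Let μ be a probability measure on a measurable space X, and let λ₁, λ₂ : X → ℝ be measurable functions with λ₁(x) ≥ κ and λ₂(x) ≥ κ for all x, where κ > 0. Then ∫ λ₁(x) log(λ₁(x)/λ₂(x)) dμ(x) − ∫ (λ₁(x) − λ₂(x)) dμ(x) ≤ (1/κ) ∫ (λ₁(x) − λ₂(x))² dμ(x). -/

import Mathlib

open MeasureTheory Real

theorem kl_le_chi_squared {X : Type*} [MeasurableSpace X] (μ : Measure X)
    [IsProbabilityMeasure μ] (κ : ℝ) (hκ : 0 < κ) (l1 l2 : X → ℝ)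
    (hm1 : Measurable l1) (hm2 : Measurable l2)
    (hl1 : ∀ x, κ ≤ l1 x) (hl2 : ∀ x, κ ≤ l2 x)
    (C : ℝ) (hC1 : ∀ x, l1 x ≤ C) (hC2 : ∀ x, l2 x ≤ C)
    (hint1 : Integrable (fun x => l1 x * Real.log (l1 x / l2 x)) μ)
    (hint2 : Integrable (fun x => l1 x - l2 x) μ)
    (hint3 : Integrable (fun x => (l1 x - l2 x) ^ 2) μ) :
    ∫ x, l1 x * Real.log (l1 x / l2 x) ∂μ - ∫ x, (l1 x - l2 x) ∂μ ≤
      (1 / κ) * ∫ x, (l1 x - l2 x) ^ 2 ∂μ := by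
  rw [← integral_sub hint1 hint2, ← integral_const_mul]
  refine integral_mono (hint1.sub hint2) (hint3.const_mul _) fun x => ?_
  have ha : 0 < l1 x := hκ.trans_le (hl1 x)
  have hb : 0 < l2 x := hκ.trans_le (hl2 x)
  have hlog : Real.log (l1 x / l2 x) ≤ l1 x / l2 x - 1 :=
    Real.log_le_sub_one_of_pos (div_pos ha hb)
  have h1 : l1 x * Real.log (l1 x / l2 x) ≤ l1 x * (l1 x / l2 x - 1) :=
    mul_le_mul_of_nonneg_left hlog ha.le
  have h2 : l1 x * (l1 x / l2 x - 1) - (l1 x - l2 x) = (l1 x - l2 x) ^ 2 / l2 x := by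
    field_simp
  have h3 : (l1 x - l2 x) ^ 2 / l2 x ≤ (l1 x - l2 x) ^ 2 / κ :=
    div_le_div_of_nonneg_left (sq_nonneg _) hκ (hl2 x)
  calc l1 x * Real.log (l1 x / l2 x) - (l1 x - l2 x)
      ≤ l1 x * (l1 x / l2 x - 1) - (l1 x - l2 x) := by linarith
    _ = (l1 x - l2 x) ^ 2 / l2 x := h2
    _ ≤ (l1 x - l2 x) ^ 2 / κ := h3
    _ = 1 / κ * (l1 x - l2 x) ^ 2 := by ring
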